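/- Let R be an associative unital (not necessarily commutative) ring and I a two-sided ideal of R, and let k ≥ 0 be an integer. If u is a unit of R with (u : R) − 1 ∈ I^(k+1), and x ∈ R satisfies x − 1 ∈ I^k, then u·x·u⁻¹ − x ∈ I^(2k+1). -/

import Mathlib

/-- The `m`-th power of a two-sided ideal `I` of a ring `R`, with `I ^ 0 = R` and
`I ^ (n+1)` the two-sided ideal generated by products `a * b` with `a ∈ I`, `b ∈ I ^ n`. -/
protected def TwoSidedIdeal.npow {R : Type*} [Ring R] (I : TwoSidedIdeal R) : ℕ → TwoSidedIdeal R
  | 0 => ⊤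
  | n + 1 => TwoSidedIdeal.span {x | ∃ a ∈ I, ∃ b ∈ TwoSidedIdeal.npow I n, x = a * b}

instance {R : Type*} [Ring R] : Pow (TwoSidedIdeal R) ℕ :=
  ⟨fun I n => TwoSidedIdeal.npow I n⟩

lemma pow_def {R : Type*} [Ring R] (I : TwoSidedIdeal R) (n : ℕ) :
    I ^ n = TwoSidedIdeal.npow I n := rfl

lemma mul_mem_pow_succ {R : Type*} [Ring R] (I : TwoSidedIdeal R) (n : ℕ)
    {a b : R} (ha : a ∈ I) (hb : b ∈ I ^ n) : a * b ∈ I ^ (n + 1) := by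
  rw [pow_def, TwoSidedIdeal.npow]
  exact TwoSidedIdeal.subset_span ⟨a, ha, b, hb, rfl⟩

lemma mul_mem_pow_add {R : Type*} [Ring R] (I : TwoSidedIdeal R) (m n : ℕ)
    {a b : R} (ha : a ∈ I ^ m) (hb : b ∈ I ^ n) : a * b ∈ I ^ (m + n) := by
  induction m generalizing a b with
  | zero => simpa using (I ^ n).mul_mem_left a b hb
  | succ m ih =>
    rw [pow_def, TwoSidedIdeal.npow] at ha
    let J : TwoSidedIdeal R := TwoSidedIdeal.mk'
      {a | ∀ c ∈ I ^ n, a * c ∈ I ^ (m + 1 + n)}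
      (fun c hc => by simpa using (I ^ (m + 1 + n)).zero_mem)
      (fun {x y} hx hy c hc => by
        simpa [add_mul] using (I ^ (m + 1 + n)).add_mem (hx c hc) (hy c hc))
      (fun {x} hx c hc => by simpa [neg_mul] using (I ^ (m + 1 + n)).neg_mem (hx c hc))
      (fun {x y} hy c hc => by
        simpa [mul_assoc] using (I ^ (m + 1 + n)).mul_mem_left x _ (hy c hc))
      (fun {x y} hx c hc => by
        have : y * c ∈ I ^ n := (I ^ n).mul_mem_left y c hc
        simpa [mul_assoc] using hx _ this)
    have hJ := TwoSidedIdeal.mem_span_iff.mp ha J ?_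
    · rw [show J = _ from rfl, TwoSidedIdeal.mem_mk'] at hJ
      exact hJ b hb
    · rintro z ⟨p, hp, q, hq, rfl⟩
      simp only [J, SetLike.mem_coe, TwoSidedIdeal.mem_mk', Set.mem_setOf_eq]
      intro c hc
      rw [mul_assoc]
      have h1 : q * c ∈ I ^ (m + n) := ih hq hc
      have h2 := mul_mem_pow_succ I (m + n) hp h1
      simpa [Nat.add_right_comm] using h2

theorem stmt0 {R : Type*} [Ring R] (I : TwoSidedIdeal R) (k : ℕ)
    (u : Rˣ) (hu : (u : R) - 1 ∈ I ^ (k + 1))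
    (x : R) (hx : x - 1 ∈ I ^ k) :
    (u : R) * x * (↑u⁻¹ : R) - x ∈ I ^ (2 * k + 1) := by
  have key : (u : R) * x - x * u ∈ I ^ (2 * k + 1) := by
    have h1 : ((u : R) - 1) * (x - 1) ∈ I ^ (k + 1 + k) := mul_mem_pow_add I _ _ hu hx
    have h2 : (x - 1) * ((u : R) - 1) ∈ I ^ (k + k + 1) := by
      have := mul_mem_pow_add I k (k + 1) hx hu
      simpa [Nat.add_assoc] using this
    have e1 : k + 1 + k = 2 * k + 1 := by ring
    have e2 : k + k + 1 = 2 * k + 1 := by ring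
    rw [e1] at h1; rw [e2] at h2
    have := (I ^ (2 * k + 1)).sub_mem h1 h2
    have heq : ((u : R) - 1) * (x - 1) - (x - 1) * ((u : R) - 1) = (u : R) * x - x * u := by
      noncomm_ring
    rwa [heq] at this
  have : ((u : R) * x - x * u) * (↑u⁻¹ : R) ∈ I ^ (2 * k + 1) :=
    (I ^ (2 * k + 1)).mul_mem_right _ _ key
  have heq : ((u : R) * x - x * u) * (↑u⁻¹ : R) = (u : R) * x * (↑u⁻¹ : R) - x := by
    rw [sub_mul]
    congr 1
    rw [mul_assoc, Units.mul_inv, mul_one]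
  rwa [heq] at this
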